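/- arXiv:2209.00220 — 2 statements merged into one kernel-verified Lean document; each statement's English description precedes it below -/
import Mathlib

section
/- Let v1 and v2 be codes of lengths l1 and l2 respectively, let K ≥ max(l1, l2), and let m = min(l1, l2). Then pad_K(v1) < pad_K(v2) if and only if val_m(v1) < val_m(v2), or val_m(v1) = val_m(v2) and l1 < l2. Moreover, pad_K(v1) = pad_K(v2) if and only if val_m(v1) = val_m(v2) and l1 = l2. Consequently, for every comparison operator op ∈ {<, >, ≤, ≥, =, ≠}, the truth value of pad_K(v1) op pad_K(v2) is determined by the first m bytes of the two codes together with the comparison of their lengths. -/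
/-- A code: a nonempty finite sequence of bytes whose last byte is nonzero. -/
def IsCode (v : List ℕ) : Prop :=
  v ≠ [] ∧ (∀ b ∈ v, b < 256) ∧ v.getLast? ≠ some 0

/-- `padVal K v` = Σ_{j=1}^{l} v_j · 256^{K−j}, the `K`-byte zero-padded value. -/
def padVal (K : ℕ) (v : List ℕ) : ℕ :=
  ∑ j ∈ Finset.range v.length, v.getD j 0 * 256 ^ (K - 1 - j)

/-- `prefixVal m v` = Σ_{j=1}^{m} v_j · 256^{m−j}, the `m`-byte prefix value. -/
def prefixVal (m : ℕ) (v : List ℕ) : ℕ :=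
  ∑ j ∈ Finset.range m, v.getD j 0 * 256 ^ (m - 1 - j)

lemma prefixVal_succ (v : List ℕ) (n : ℕ) :
    prefixVal (n + 1) v = 256 * prefixVal n v + v.getD n 0 := by
  unfold prefixVal
  rw [Finset.sum_range_succ, Finset.mul_sum]
  congr 1
  · apply Finset.sum_congr rfl
    intro j hj
    simp only [Finset.mem_range] at hj
    rw [show n + 1 - 1 - j = (n - 1 - j) + 1 by omega, pow_succ]
    ring
  · simp

lemma prefixVal_lt_pow (v : List ℕ) (hv : ∀ b ∈ v, b < 256) (n : ℕ) :
    prefixVal n v < 256 ^ n := by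
  induction n with
  | zero => simp [prefixVal]
  | succ n ih =>
    rw [prefixVal_succ, pow_succ]
    have hd : v.getD n 0 < 256 := by
      rcases Nat.lt_or_ge n v.length with h | h
      · rw [List.getD_eq_getElem?_getD, List.getElem?_eq_getElem h]
        exact hv _ (List.getElem_mem h)
      · rw [List.getD_eq_default _ _ h]; norm_num
    omega

lemma padVal_eq_prefixVal (v : List ℕ) (K : ℕ) (hK : v.length ≤ K) :
    padVal K v = prefixVal v.length v * 256 ^ (K - v.length) := by
  unfold padVal prefixVal
  rw [Finset.sum_mul]
  apply Finset.sum_congr rfl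
  intro j hj
  simp only [Finset.mem_range] at hj
  rw [mul_assoc, ← pow_add]
  congr 2
  omega

lemma getD_drop (v : List ℕ) (m i : ℕ) :
    (v.drop m).getD i 0 = v.getD (m + i) 0 := by
  simp [List.getD_eq_getElem?_getD, List.getElem?_drop]

lemma prefixVal_split (v : List ℕ) (m l : ℕ) (h : m ≤ l) :
    prefixVal l v = prefixVal m v * 256 ^ (l - m) + prefixVal (l - m) (v.drop m) := by
  have h1 : prefixVal (l - m) (v.drop m)
      = ∑ j ∈ Finset.Ico m l, v.getD j 0 * 256 ^ (l - 1 - j) := by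
    unfold prefixVal
    rw [Finset.sum_Ico_eq_sum_range]
    apply Finset.sum_congr rfl
    intro i hi
    simp only [Finset.mem_range] at hi
    rw [getD_drop]
    congr 2
    omega
  rw [h1]
  unfold prefixVal
  rw [Finset.sum_mul, Finset.range_eq_Ico, ← Finset.sum_Ico_consecutive _ (Nat.zero_le m) h,
    ← Finset.range_eq_Ico]
  congr 1
  apply Finset.sum_congr rfl
  intro j hj
  simp only [Finset.mem_range] at hj
  rw [mul_assoc, ← pow_add]
  congr 2
  omega

lemma prefixVal_pos (v : List ℕ) (hne : v ≠ []) (hlast : v.getLast? ≠ some 0) :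
    0 < prefixVal v.length v := by
  have hlen : 0 < v.length := List.length_pos_iff.mpr hne
  have h1 : v.getD (v.length - 1) 0 ≠ 0 := by
    rw [List.getD_eq_getElem?_getD, ← List.getLast?_eq_getElem?]
    rcases List.getLast?_isSome.mpr hne |> Option.isSome_iff_exists.mp with ⟨a, ha⟩
    rw [ha]
    simp only [Option.getD_some]
    intro h0
    exact hlast (h0 ▸ ha)
  unfold prefixVal
  have hmem : v.length - 1 ∈ Finset.range v.length := by
    simp only [Finset.mem_range]; omega
  calc 0 < v.getD (v.length - 1) 0 * 256 ^ (v.length - 1 - (v.length - 1)) := by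
        simp only [Nat.sub_self, pow_zero, mul_one]; omega
    _ ≤ _ := Finset.single_le_sum
        (f := fun j => v.getD j 0 * 256 ^ (v.length - 1 - j))
        (fun i _ => Nat.zero_le _) hmem

/-- Core lemma under the assumption `v1.length ≤ v2.length`. -/
lemma core (v1 v2 : List ℕ) (hv1 : IsCode v1) (hv2 : IsCode v2) (K : ℕ)
    (hle : v1.length ≤ v2.length) (hK : v2.length ≤ K) :
    (padVal K v1 < padVal K v2 ↔
      (prefixVal v1.length v1 < prefixVal v1.length v2 ∨
        (prefixVal v1.length v1 = prefixVal v1.length v2 ∧ v1.length < v2.length))) ∧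
    (padVal K v1 = padVal K v2 ↔
      (prefixVal v1.length v1 = prefixVal v1.length v2 ∧ v1.length = v2.length)) := by
  set m := v1.length with hm
  set l := v2.length with hl
  set A := prefixVal m v1 with hA
  set B := prefixVal m v2 with hB
  have hKm : m ≤ K := le_trans hle hK
  have hp1 : padVal K v1 = A * 256 ^ (K - m) := padVal_eq_prefixVal v1 K hKm
  set t := prefixVal (l - m) (v2.drop m) with ht
  have hp2 : padVal K v2 = B * 256 ^ (K - m) + t * 256 ^ (K - l) := by
    rw [padVal_eq_prefixVal v2 K hK, ← hl, prefixVal_split v2 m l hle, ← hB, ← ht,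
      add_mul, mul_assoc, ← pow_add]
    congr 3
    omega
  set s := t * 256 ^ (K - l) with hs
  have hslt : s < 256 ^ (K - m) := by
    have htlt : t < 256 ^ (l - m) :=
      prefixVal_lt_pow _ (fun b hb => hv2.2.1 b (List.mem_of_mem_drop hb)) _
    have hpow : (0:ℕ) < 256 ^ (K - l) := by positivity
    calc s < 256 ^ (l - m) * 256 ^ (K - l) := (Nat.mul_lt_mul_right hpow).mpr htlt
      _ = 256 ^ (K - m) := by rw [← pow_add]; congr 1; omega
  have hscase : (m = l → s = 0) ∧ (m < l → 0 < s) := by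
    constructor
    · intro hml
      have : l - m = 0 := by omega
      simp [hs, ht, this, prefixVal]
    · intro hml
      have hdne : v2.drop m ≠ [] := by
        intro h
        have := List.drop_eq_nil_iff.mp h
        omega
      have hlen : (v2.drop m).length = l - m := by simp [hl]
      have hlast : (v2.drop m).getLast? ≠ some 0 := by
        rw [List.getLast?_eq_getElem?, List.getElem?_drop, hlen,
          show m + (l - m - 1) = v2.length - 1 by omega, ← List.getLast?_eq_getElem?]
        exact hv2.2.2
      have := prefixVal_pos (v2.drop m) hdne hlast
      rw [hlen] at this
      have : 0 < t := this
      have hpow : 0 < 256 ^ (K - l) := Nat.pow_pos (by norm_num)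
      exact Nat.mul_pos this hpow
  have hX : 0 < 256 ^ (K - m) := Nat.pow_pos (by norm_num)
  set X := 256 ^ (K - m) with hXd
  constructor
  · rw [hp1, hp2]
    constructor
    · intro h
      rcases lt_trichotomy A B with hAB | hAB | hAB
      · exact Or.inl hAB
      · right
        refine ⟨hAB, ?_⟩
        rcases Nat.lt_or_ge m l with h' | h'
        · exact h'
        · have hml : m = l := le_antisymm hle (by omega)
          have : s = 0 := hscase.1 hml
          rw [hAB, this] at h
          omega
      · exfalso
        have : B * X + X ≤ A * X := by
          have : (B + 1) * X ≤ A * X := Nat.mul_le_mul_right X hAB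
          linarith [this]
        omega
    · intro h
      rcases h with hAB | ⟨hAB, hml⟩
      · have : A * X + X ≤ B * X := by
          have : (A + 1) * X ≤ B * X := Nat.mul_le_mul_right X hAB
          linarith [this]
        omega
      · have := hscase.2 hml
        rw [hAB]
        omega
  · rw [hp1, hp2]
    constructor
    · intro h
      have hAB : A = B := by
        rcases lt_trichotomy A B with hAB | hAB | hAB
        · exfalso
          have : (A + 1) * X ≤ B * X := Nat.mul_le_mul_right X hAB
          rw [add_mul, one_mul] at this
          omega
        · exact hAB
        · exfalso
          have : (B + 1) * X ≤ A * X := Nat.mul_le_mul_right X hAB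
          rw [add_mul, one_mul] at this
          omega
      refine ⟨hAB, ?_⟩
      rcases Nat.lt_or_ge m l with h' | h'
      · exfalso
        have := hscase.2 h'
        rw [hAB] at h
        omega
      · omega
    · rintro ⟨hAB, hml⟩
      have : s = 0 := hscase.1 hml
      rw [hAB]
      omega

/-- Lemma 1: comparison of zero-padded codes is determined by the first
`m = min l1 l2` bytes together with the comparison of the lengths;
this holds for every comparison operator `<, >, ≤, ≥, =, ≠`. -/
theorem padded_comparison_determined_by_min_prefix
    (v1 v2 : List ℕ) (hv1 : IsCode v1) (hv2 : IsCode v2)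
    (l1 l2 m K : ℕ) (hl1 : l1 = v1.length) (hl2 : l2 = v2.length)
    (hm : m = min l1 l2) (hK : max l1 l2 ≤ K) :
    (padVal K v1 < padVal K v2 ↔
      (prefixVal m v1 < prefixVal m v2 ∨ (prefixVal m v1 = prefixVal m v2 ∧ l1 < l2))) ∧
    (padVal K v1 = padVal K v2 ↔
      (prefixVal m v1 = prefixVal m v2 ∧ l1 = l2)) ∧
    (padVal K v1 > padVal K v2 ↔
      (prefixVal m v2 < prefixVal m v1 ∨ (prefixVal m v1 = prefixVal m v2 ∧ l2 < l1))) ∧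
    (padVal K v1 ≤ padVal K v2 ↔
      (prefixVal m v1 < prefixVal m v2 ∨ (prefixVal m v1 = prefixVal m v2 ∧ l1 ≤ l2))) ∧
    (padVal K v1 ≥ padVal K v2 ↔
      (prefixVal m v2 < prefixVal m v1 ∨ (prefixVal m v1 = prefixVal m v2 ∧ l2 ≤ l1))) ∧
    (padVal K v1 ≠ padVal K v2 ↔
      ¬(prefixVal m v1 = prefixVal m v2 ∧ l1 = l2)) := by
  subst hl1 hl2
  have hmax1 : v1.length ≤ K := le_trans (le_max_left _ _) hK
  have hmax2 : v2.length ≤ K := le_trans (le_max_right _ _) hK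
  rcases Nat.le_total v1.length v2.length with hle | hle
  · have hm' : m = v1.length := by omega
    subst hm'
    obtain ⟨h1, h2⟩ := core v1 v2 hv1 hv2 K hle hmax2
    refine ⟨h1, h2, ?_, ?_, ?_, ?_⟩ <;> omega
  · have hm' : m = v2.length := by omega
    subst hm'
    obtain ⟨h1, h2⟩ := core v2 v1 hv2 hv1 K hle hmax1
    refine ⟨?_, ?_, ?_, ?_, ?_, ?_⟩ <;> omega
end

section
/- Let c be a code of length l and v a code of length greater than l, with K at least the length of v. If the first l bytes of v equal the bytes of c (i.e., val_l(v) = val_l(c)), then pad_K(v) > pad_K(c). In particular, during a scan for the predicate v > c, upon finding that v's first l bytes equal c and that v has a further byte, the scan can conclude v passes the predicate without fetching v's remaining bytes, because the last byte of v is nonzero while c is padded with zeros. -/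
lemma prefix_mul (w : List ℕ) (l K : ℕ) (hK : l ≤ K) :
    prefixVal l w * 256 ^ (K - l) =
      ∑ j ∈ Finset.range l, w.getD j 0 * 256 ^ (K - 1 - j) := by
  rw [prefixVal, Finset.sum_mul]
  refine Finset.sum_congr rfl fun j hj => ?_
  rw [Finset.mem_range] at hj
  rw [mul_assoc, ← pow_add]
  congr 2
  omega

/-- Early-stop claim of the PP-VBS scan: if the first `l` bytes of the longer code `v`
agree with the `l`-byte code `c`, then `pad_K(v) > pad_K(c)` — `v` passes the
predicate `v > c` without fetching its remaining bytes. -/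
theorem longer_code_with_equal_prefix_gt
    (c v : List ℕ) (hc : IsCode c) (hv : IsCode v)
    (l K : ℕ) (hl : l = c.length) (hlt : l < v.length) (hK : v.length ≤ K)
    (hpre : prefixVal l v = prefixVal l c) :
    padVal K v > padVal K c := by
  have hlK : l ≤ K := le_trans (le_of_lt hlt) hK
  have hcpad : padVal K c = prefixVal l c * 256 ^ (K - l) := by
    rw [padVal, prefix_mul c l K hlK, hl]
  have hsplit : padVal K v =
      (∑ j ∈ Finset.range l, v.getD j 0 * 256 ^ (K - 1 - j)) +
      ∑ j ∈ Finset.Ico l v.length, v.getD j 0 * 256 ^ (K - 1 - j) := by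
    rw [padVal, Finset.range_eq_Ico, ← Finset.sum_Ico_consecutive _ (Nat.zero_le l) (le_of_lt hlt), Finset.range_eq_Ico]
  -- last byte of v is nonzero
  have hne : v ≠ [] := hv.1
  have hlast : v.getD (v.length - 1) 0 ≠ 0 := by
    have h1 : v.getLast? = some (v.getLast hne) := List.getLast?_eq_getLast hne
    have h2 : v.getLast hne = v.get ⟨v.length - 1, by
      have := List.length_pos_iff.mpr hne; omega⟩ := by simp [List.getLast_eq_getElem hne]
    have h3 : v.getD (v.length - 1) 0 = v.get ⟨v.length - 1, by
      have := List.length_pos_iff.mpr hne; omega⟩ := by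
      rw [List.getD_eq_getElem v 0 (by have := List.length_pos_iff.mpr hne; omega)]
      simp
    rw [h3, ← h2]
    intro h
    exact hv.2.2 (by rw [h1, h])
  have htail : 1 ≤ ∑ j ∈ Finset.Ico l v.length, v.getD j 0 * 256 ^ (K - 1 - j) := by
    calc 1 ≤ v.getD (v.length - 1) 0 * 256 ^ (K - 1 - (v.length - 1)) :=
          Nat.one_le_iff_ne_zero.mpr (by positivity)
      _ ≤ _ := Finset.single_le_sum (f := fun j => v.getD j 0 * 256 ^ (K - 1 - j))
          (fun i _ => Nat.zero_le _) (by simp [Finset.mem_Ico]; omega)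
  have := prefix_mul v l K hlK
  rw [hsplit, ← this, hpre, hcpad]
  omega
end
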